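/- There exists N such that for all n ≥ N and every odd integer d with 2^n − 1 < d < 3·2^{n−1} − 1, the 2-density of the set D := {i : 1 ≤ i ≤ d, i odd} \ {2^n − 1} equals 1/(n−1); that is, every solution U of any length ℓ for D satisfies (n−1)·s(U) ≥ ℓ, and some solution attains (n−1)·s(U) = ℓ. -/
import Mathlib


/-- The binary weight `s₂(m)`: the sum of the base-2 digits of `m`. -/
def s2 (m : ℕ) : ℕ := (Nat.digits 2 m).sum

/-- The shift map on `{0, …, 2^ℓ - 1}`: it fixes `2^ℓ - 1` and sends any other `i`
to the remainder of `2·i` modulo `2^ℓ - 1`. -/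
def shift2 (ℓ i : ℕ) : ℕ := if i = 2 ^ ℓ - 1 then i else (2 * i) % (2 ^ ℓ - 1)

/-- `U : ℕ → ℕ` (supported on `D`) is a solution of length `ℓ` for `D`:
`0 ≤ u_d ≤ 2^ℓ - 1` and `∑ d·u_d` is a positive multiple of `2^ℓ - 1`. -/
structure IsSolution (D : Finset ℕ) (ℓ : ℕ) (U : ℕ → ℕ) : Prop where
  len_pos : 1 ≤ ℓ
  bounded : ∀ d, U d ≤ 2 ^ ℓ - 1
  supp_sub : ∀ d, d ∉ D → U d = 0
  dvd : (2 ^ ℓ - 1) ∣ ∑ d ∈ D, d * U d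
  pos : 0 < ∑ d ∈ D, d * U d

/-- The weight `s(U) = ∑_{d ∈ D} s₂(u_d)` of a solution. -/
def weight (D : Finset ℕ) (U : ℕ → ℕ) : ℕ := ∑ d ∈ D, s2 (U d)

/-- The support map `φ_U(k) = (∑_{d ∈ D} d·δ^k(u_d)) / (2^ℓ - 1)` of a solution,
viewed as an `ℓ`-periodic function on `ℕ`. -/
def supportMap (D : Finset ℕ) (ℓ : ℕ) (U : ℕ → ℕ) (k : ℕ) : ℕ :=
  (∑ d ∈ D, d * (shift2 ℓ)^[k] (U d)) / (2 ^ ℓ - 1)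

/-- A solution is irreducible when its support map is injective on `ℤ/ℓℤ`,
i.e. injective on `{0, …, ℓ-1}`. -/
def IrreducibleSol (D : Finset ℕ) (ℓ : ℕ) (U : ℕ → ℕ) : Prop :=
  Set.InjOn (supportMap D ℓ U) ↑(Finset.range ℓ)

/-- `U` is a shift of `V` (coordinatewise iterate of the shift map). -/
def IsShiftOf (ℓ : ℕ) (U V : ℕ → ℕ) : Prop :=
  ∃ k, ∀ d, U d = (shift2 ℓ)^[k] (V d)

/-- The set of odd integers `1 ≤ i ≤ d`. -/
def oddUpTo (d : ℕ) : Finset ℕ := (Finset.range (d + 1)).filter (fun i => i % 2 = 1)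

/-- `D = {i : 1 ≤ i ≤ 2^{n+1} - 3, i odd}`. -/
def oddD (n : ℕ) : Finset ℕ := oddUpTo (2 ^ (n + 1) - 3)

/-- The solution with `u_a = 1` and all other coordinates `0`. -/
def sol1 (a : ℕ) : ℕ → ℕ := fun d => if d = a then 1 else 0

/-- The solution with `u_a = x`, `u_b = y` and all other coordinates `0`. -/
def sol2 (a x b y : ℕ) : ℕ → ℕ := fun d => if d = a then x else if d = b then y else 0

/-- The solution with `u_a = x`, `u_b = y`, `u_c = z` and all other coordinates `0`. -/
def sol3 (a x b y c z : ℕ) : ℕ → ℕ :=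
  fun d => if d = a then x else if d = b then y else if d = c then z else 0



lemma s2_zero : s2 0 = 0 := by simp [s2]

lemma s2_rec (m : ℕ) : s2 m = m % 2 + s2 (m / 2) := by
  rcases Nat.eq_zero_or_pos m with h | h
  · simp [h, s2]
  · rw [s2, Nat.digits_def' (by norm_num : 1 < 2) h]; rfl

lemma s2_eq_zero {m : ℕ} (h : s2 m = 0) : m = 0 := by
  induction m using Nat.strong_induction_on with
  | _ m ih =>
    rcases Nat.eq_zero_or_pos m with h0 | h0
    · exact h0
    · rw [s2_rec] at h
      have h2 : s2 (m / 2) = 0 := by omega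
      have := ih (m / 2) (Nat.div_lt_self h0 one_lt_two) h2
      omega

lemma s2_succ_le (a : ℕ) : s2 (a + 1) ≤ s2 a + 1 := by
  induction a using Nat.strong_induction_on with
  | _ a ih =>
    rcases Nat.even_or_odd a with ⟨b, hb⟩ | ⟨b, hb⟩
    · subst hb
      rw [s2_rec (b + b + 1), s2_rec (b + b)]
      have h1 : (b + b + 1) / 2 = b := by omega
      have h2 : (b + b) / 2 = b := by omega
      rw [h1, h2]; omega
    · subst hb
      have h1 : (2 * b + 1 + 1) = 2 * (b + 1) := by ring
      rw [h1, s2_rec (2 * (b + 1)), s2_rec (2 * b + 1)]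
      have h2 : 2 * (b + 1) % 2 = 0 := by omega
      have h3 : 2 * (b + 1) / 2 = b + 1 := by omega
      have h4 : (2 * b + 1) / 2 = b := by omega
      rw [h2, h3, h4]
      have := ih b (by omega)
      omega

lemma s2_add_le_aux : ∀ n a b : ℕ, a + b = n → s2 (a + b) ≤ s2 a + s2 b := by
  intro n
  induction n using Nat.strong_induction_on with
  | _ n ih =>
    intro a b hn
    rcases Nat.eq_zero_or_pos a with h0 | h0
    · simp [h0, s2_zero]
    rcases Nat.eq_zero_or_pos b with h1 | h1
    · simp [h1, s2_zero]
    rw [s2_rec (a + b), s2_rec a, s2_rec b]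
    rcases Nat.mod_two_eq_zero_or_one a with ha | ha <;>
      rcases Nat.mod_two_eq_zero_or_one b with hb | hb
    · have h2 : (a + b) % 2 = 0 := by omega
      have h3 : (a + b) / 2 = a / 2 + b / 2 := by omega
      have := ih (a / 2 + b / 2) (by omega) (a / 2) (b / 2) rfl
      rw [h2, h3]; omega
    · have h2 : (a + b) % 2 = 1 := by omega
      have h3 : (a + b) / 2 = a / 2 + b / 2 := by omega
      have := ih (a / 2 + b / 2) (by omega) (a / 2) (b / 2) rfl
      rw [h2, h3]; omega
    · have h2 : (a + b) % 2 = 1 := by omega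
      have h3 : (a + b) / 2 = a / 2 + b / 2 := by omega
      have := ih (a / 2 + b / 2) (by omega) (a / 2) (b / 2) rfl
      rw [h2, h3]; omega
    · have h2 : (a + b) % 2 = 0 := by omega
      have h3 : (a + b) / 2 = a / 2 + b / 2 + 1 := by omega
      have i1 : s2 (a / 2 + b / 2 + 1) ≤ s2 (a / 2 + b / 2) + 1 := s2_succ_le _
      have i2 := ih (a / 2 + b / 2) (by omega) (a / 2) (b / 2) rfl
      rw [h2, h3]; omega

lemma s2_add_le (a b : ℕ) : s2 (a + b) ≤ s2 a + s2 b := s2_add_le_aux (a + b) a b rfl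

lemma s2_two_mul (a : ℕ) : s2 (2 * a) = s2 a := by
  rcases Nat.eq_zero_or_pos a with h | h
  · simp [h]
  · rw [s2_rec (2 * a)]
    have h2 : 2 * a % 2 = 0 := by omega
    have h3 : 2 * a / 2 = a := by omega
    rw [h2, h3]; omega

lemma s2_mul_le (a b : ℕ) : s2 (a * b) ≤ s2 a * s2 b := by
  induction b using Nat.strong_induction_on with
  | _ b ih =>
    rcases Nat.eq_zero_or_pos b with h0 | h0
    · simp [h0, s2_zero]
    have hb : b = 2 * (b / 2) + b % 2 := by omega
    have key : a * b = 2 * (a * (b / 2)) + a * (b % 2) := by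
      conv_lhs => rw [hb]
      ring
    calc s2 (a * b) ≤ s2 (2 * (a * (b / 2))) + s2 (a * (b % 2)) := by
          rw [key]; exact s2_add_le _ _
      _ = s2 (a * (b / 2)) + s2 (a * (b % 2)) := by rw [s2_two_mul]
      _ ≤ s2 a * s2 (b / 2) + s2 a * (b % 2) := by
          have h1 := ih (b / 2) (by omega)
          have h2 : s2 (a * (b % 2)) ≤ s2 a * (b % 2) := by
            rcases Nat.mod_two_eq_zero_or_one b with h | h <;> simp [h, s2_zero]
          omega
      _ = s2 a * (s2 (b / 2) + b % 2) := by ring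
      _ = s2 a * s2 b := by rw [s2_rec b]; ring

lemma s2_pow_sub_one (ℓ : ℕ) : s2 (2 ^ ℓ - 1) = ℓ := by
  induction ℓ with
  | zero => simp [s2]
  | succ k ih =>
    have hp : (1:ℕ) ≤ 2 ^ k := Nat.one_le_two_pow
    have h : 2 ^ (k + 1) - 1 = 2 * (2 ^ k - 1) + 1 := by
      have h2 : (2:ℕ) ^ (k + 1) = 2 * 2 ^ k := by ring
      omega
    rw [h, s2_rec]
    have h2 : (2 * (2 ^ k - 1) + 1) % 2 = 1 := by omega
    have h3 : (2 * (2 ^ k - 1) + 1) / 2 = 2 ^ k - 1 := by omega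
    rw [h2, h3, ih]; omega

lemma s2_split (ℓ a b : ℕ) (hb : b < 2 ^ ℓ) : s2 (2 ^ ℓ * a + b) = s2 a + s2 b := by
  induction ℓ generalizing b with
  | zero => interval_cases b; simp [s2_zero]
  | succ k ih =>
    have hp : (2:ℕ) ^ (k + 1) = 2 * 2 ^ k := by ring
    have e : 2 ^ (k + 1) * a + b = 2 * (2 ^ k * a) + b := by rw [hp]; ring
    rw [e, s2_rec (2 * (2 ^ k * a) + b), s2_rec b]
    have h2 : (2 * (2 ^ k * a) + b) % 2 = b % 2 := by omega
    have h3 : (2 * (2 ^ k * a) + b) / 2 = 2 ^ k * a + b / 2 := by omega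
    rw [h2, h3, ih (b / 2) (by omega)]
    omega

lemma le_s2_of_dvd (ℓ m : ℕ) (hm : 0 < m) (hd : (2 ^ ℓ - 1) ∣ m) : ℓ ≤ s2 m := by
  induction m using Nat.strong_induction_on with
  | _ m ih =>
    rcases Nat.eq_zero_or_pos ℓ with hℓ | hℓ
    · omega
    have h2ℓ : (2:ℕ) ≤ 2 ^ ℓ := by
      calc (2:ℕ) = 2 ^ 1 := by norm_num
        _ ≤ 2 ^ ℓ := Nat.pow_le_pow_right (by omega) hℓ
    rcases Nat.lt_or_ge m (2 ^ ℓ) with h | h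
    · have h1 : 2 ^ ℓ - 1 ≤ m := Nat.le_of_dvd hm hd
      have h2 : m = 2 ^ ℓ - 1 := by
        rcases hd with ⟨c, hc⟩
        rcases Nat.lt_or_ge c 2 with hc2 | hc2
        · interval_cases c <;> omega
        · have : (2 ^ ℓ - 1) * 2 ≤ (2 ^ ℓ - 1) * c := Nat.mul_le_mul_left _ hc2
          omega
      rw [h2, s2_pow_sub_one]
    · set a := m / 2 ^ ℓ with ha
      set b := m % 2 ^ ℓ with hb
      have hm2 : m = 2 ^ ℓ * a + b := by rw [ha, hb]; exact (Nat.div_add_mod m (2 ^ ℓ)).symm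
      have hblt : b < 2 ^ ℓ := Nat.mod_lt _ (by omega)
      have ha1 : 1 ≤ a := Nat.one_le_div_iff (by omega) |>.mpr h
      have h2a : 2 * a ≤ 2 ^ ℓ * a := Nat.mul_le_mul_right a h2ℓ
      have hlt : a + b < m := by omega
      have hq : (2 ^ ℓ - 1) * a = 2 ^ ℓ * a - a := by rw [Nat.sub_mul, one_mul]
      have hdvd : (2 ^ ℓ - 1) ∣ (a + b) := by
        rcases hd with ⟨c, hc⟩
        have hle : a ≤ 2 ^ ℓ * a := Nat.le_mul_of_pos_left a (by positivity)
        have : a + b = (2 ^ ℓ - 1) * c - (2 ^ ℓ - 1) * a := by omega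
        rw [this]
        exact Nat.dvd_sub ⟨c, rfl⟩ ⟨a, rfl⟩
      have hpos : 0 < a + b := by omega
      have key := ih (a + b) hlt hpos hdvd
      calc ℓ ≤ s2 (a + b) := key
        _ ≤ s2 a + s2 b := s2_add_le a b
        _ = s2 m := by rw [hm2, s2_split ℓ a b hblt]

lemma two_pow_s2_le (m : ℕ) : 2 ^ s2 m ≤ m + 1 := by
  induction m using Nat.strong_induction_on with
  | _ m ih =>
    rcases Nat.eq_zero_or_pos m with h | h
    · simp [h, s2_zero]
    · rw [s2_rec m, pow_add]
      have h1 := ih (m / 2) (Nat.div_lt_self h one_lt_two)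
      rcases Nat.mod_two_eq_zero_or_one m with h2 | h2 <;> rw [h2] <;> simp <;> omega

lemma s2_second : ∀ m n : ℕ, 1 ≤ n → s2 m = n → m ≠ 2 ^ n - 1 →
    3 * 2 ^ (n - 1) - 1 ≤ m := by
  intro m
  induction m using Nat.strong_induction_on with
  | _ m ih =>
    intro n hn h hm
    have hm0 : m ≠ 0 := by
      rintro rfl; rw [s2_zero] at h; omega
    have hp1 : (1:ℕ) ≤ 2 ^ (n - 1) := Nat.one_le_two_pow
    have hpow : (2:ℕ) ^ n = 2 * 2 ^ (n - 1) := by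
      rw [← pow_succ']; congr 1; omega
    rcases Nat.mod_two_eq_zero_or_one m with hpar | hpar
    · have hs : s2 (m / 2) = n := by rw [s2_rec m] at h; omega
      have := two_pow_s2_le (m / 2)
      rw [hs] at this
      omega
    · have hs : s2 (m / 2) = n - 1 := by rw [s2_rec m] at h; omega
      rcases Nat.lt_or_ge n 2 with h2 | h2
      · have hn1 : n = 1 := by omega
        subst hn1
        have hz : m / 2 = 0 := s2_eq_zero (by omega)
        have : m = 1 := by omega
        simp [this] at hm
      · have hp2 : (1:ℕ) ≤ 2 ^ (n - 1 - 1) := Nat.one_le_two_pow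
        have hpow2 : (2:ℕ) ^ (n - 1) = 2 * 2 ^ (n - 1 - 1) := by
          rw [← pow_succ']; congr 1; omega
        have hne : m / 2 ≠ 2 ^ (n - 1) - 1 := by
          intro hcon
          apply hm
          omega
        have := ih (m / 2) (Nat.div_lt_self (by omega) one_lt_two) (n - 1) (by omega) hs hne
        omega

lemma s2_lt_of_mem (n i : ℕ) (hn : 1 ≤ n) (hne : i ≠ 2 ^ n - 1)
    (hlt : i < 3 * 2 ^ (n - 1) - 1) : s2 i < n := by
  by_contra hcon
  push_neg at hcon
  rcases Nat.eq_or_lt_of_le hcon with heq | hgt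
  · have := s2_second i n hn heq.symm hne; omega
  · have h1 := two_pow_s2_le i
    have h2 : 2 ^ (n + 1) ≤ 2 ^ s2 i := Nat.pow_le_pow_right (by omega) (by omega)
    have hp : (2:ℕ) ^ (n + 1) = 4 * 2 ^ (n - 1) := by
      have he : n + 1 = (n - 1) + 2 := by omega
      rw [he, pow_add]; ring
    omega

lemma s2_one : s2 1 = 1 := by simp [s2]

lemma s2_sum_le (s : Finset ℕ) (f : ℕ → ℕ) :
    s2 (∑ i ∈ s, f i) ≤ ∑ i ∈ s, s2 (f i) := by
  induction s using Finset.cons_induction with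
  | empty => simp [s2_zero]
  | cons a s ha ih =>
    rw [Finset.sum_cons, Finset.sum_cons]
    exact le_trans (s2_add_le _ _) (by omega)

/-- For `n` large enough and odd `d` with `2^n − 1 < d < 3·2^{n−1} − 1`, the 2-density
of `D = {i : 1 ≤ i ≤ d, i odd} \ {2^n − 1}` is `1/(n−1)`: every solution of length `ℓ`
satisfies `(n−1)·s(U) ≥ ℓ`, and some solution attains equality. -/
theorem density_case_i :
    ∃ N : ℕ, ∀ n : ℕ, N ≤ n → ∀ d : ℕ, d % 2 = 1 →
      2 ^ n - 1 < d → d < 3 * 2 ^ (n - 1) - 1 →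
      (∀ ℓ U, IsSolution ((oddUpTo d).erase (2 ^ n - 1)) ℓ U →
        ℓ ≤ (n - 1) * weight ((oddUpTo d).erase (2 ^ n - 1)) U) ∧
      (∃ ℓ U, IsSolution ((oddUpTo d).erase (2 ^ n - 1)) ℓ U ∧
        ℓ = (n - 1) * weight ((oddUpTo d).erase (2 ^ n - 1)) U) := by
  refine ⟨3, fun n hn d hd hlo hhi => ?_⟩
  set D := (oddUpTo d).erase (2 ^ n - 1) with hD
  have hn1 : 1 ≤ n := by omega
  have hp1 : (1:ℕ) ≤ 2 ^ (n - 1) := Nat.one_le_two_pow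
  have hpn : (2:ℕ) ^ n = 2 * 2 ^ (n - 1) := by
    rw [← pow_succ']; congr 1; omega
  have hp4 : (4:ℕ) ≤ 2 ^ (n - 1) := by
    calc (4:ℕ) = 2 ^ 2 := by norm_num
      _ ≤ 2 ^ (n - 1) := Nat.pow_le_pow_right (by omega) (by omega)
  constructor
  · intro ℓ U hU
    have h1 : ℓ ≤ s2 (∑ i ∈ D, i * U i) := le_s2_of_dvd ℓ _ hU.pos hU.dvd
    have h2 := s2_sum_le D (fun i => i * U i)
    have h3 : ∑ i ∈ D, s2 (i * U i) ≤ ∑ i ∈ D, (n - 1) * s2 (U i) := by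
      apply Finset.sum_le_sum
      intro i hi
      have hi1 : i ≠ 2 ^ n - 1 := Finset.ne_of_mem_erase hi
      have hi2 : i ∈ oddUpTo d := Finset.mem_of_mem_erase hi
      have hi3 : i < d + 1 := Finset.mem_range.mp (Finset.mem_filter.mp hi2).1
      have hs := s2_lt_of_mem n i hn1 hi1 (by omega)
      calc s2 (i * U i) ≤ s2 i * s2 (U i) := s2_mul_le _ _
        _ ≤ (n - 1) * s2 (U i) := Nat.mul_le_mul_right _ (by omega)
    rw [weight, Finset.mul_sum]
    calc ℓ ≤ s2 (∑ i ∈ D, i * U i) := h1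
      _ ≤ ∑ i ∈ D, s2 (i * U i) := h2
      _ ≤ ∑ i ∈ D, (n - 1) * s2 (U i) := h3
  · set a := 2 ^ (n - 1) - 1 with ha
    have hmem : a ∈ D := by
      rw [hD, Finset.mem_erase]
      refine ⟨by omega, ?_⟩
      rw [oddUpTo, Finset.mem_filter, Finset.mem_range]
      have hev : (2:ℕ) ^ (n - 1) = 2 * 2 ^ (n - 2) := by
        rw [← pow_succ']; congr 1; omega
      exact ⟨by omega, by omega⟩
    have hsum : ∑ i ∈ D, i * sol1 a i = a := by
      rw [Finset.sum_eq_single_of_mem a hmem]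
      · simp [sol1]
      · intro j _ hj
        simp [sol1, hj]
    have hwt : weight D (sol1 a) = 1 := by
      rw [weight, Finset.sum_eq_single_of_mem a hmem]
      · simp [sol1, s2_one]
      · intro j _ hj
        simp [sol1, hj, s2_zero]
    refine ⟨n - 1, sol1 a, ⟨by omega, ?_, ?_, ?_, ?_⟩, ?_⟩
    · intro i
      rw [sol1]
      split <;> omega
    · intro i hi
      rw [sol1]
      split
      · rename_i h; exact absurd (h ▸ hmem) hi
      · rfl
    · rw [hsum]
    · rw [hsum]; omega
    · rw [hwt]; omega
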